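/- For the total link vector ℓ(Δ) with components ℓ_i(Δ)=Σ_{dim L_δ = i} f(L_δ), the cylinder and cone operators satisfy ℓ(IΔ)=(1+2C)ℓ(Δ) and ℓ(CΔ)=(1+C)ℓ(Δ)+f(Δ). -/
import Mathlib

noncomputable section

/-- for the total link vector `ℓ(Δ) = Σ_{δ ⊆ Δ} f(L_δ)` (with
the convention `f(L_Δ) = f(∅) = fempty`), the cylinder and cone operators
satisfy `ℓ(IΔ) = (1 + 2C) ℓ(Δ)` and `ℓ(CΔ) = (1 + C) ℓ(Δ) + f(Δ)`.
Faces of `IΔ` are `δ×{0}`, `δ×{1}` (links `C L_δ`) and `δ×[0,1]` (link `L_δ`);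
faces of `CΔ` are the apex (link `Δ`), the faces `δ` of `Δ` (links `C L_δ`)
and the cones `Cδ` (links `L_δ`). -/
theorem stmt17 {V P : Type} [AddCommGroup V] [Module ℚ V]
    (Cop : V →ₗ[ℚ] V) (fempty fpt : V) (hce : Cop fempty = fpt)
    (f : P → V)
    (F : P → Type) [∀ Δ, Fintype (F Δ)]
    (link : (Δ : P) → F Δ → V)
    (cyl cone : P → P)
    (eI : (Δ : P) → F (cyl Δ) ≃ (F Δ ⊕ F Δ ⊕ F Δ))
    (hlinkI : ∀ (Δ : P) (δ : F (cyl Δ)),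
      link (cyl Δ) δ = Sum.elim (fun δ₁ => Cop (link Δ δ₁))
        (Sum.elim (fun δ₁ => Cop (link Δ δ₁)) (fun δ₁ => link Δ δ₁)) (eI Δ δ))
    (eC : (Δ : P) → F (cone Δ) ≃ (Unit ⊕ F Δ ⊕ F Δ))
    (hlinkC : ∀ (Δ : P) (δ : F (cone Δ)),
      link (cone Δ) δ = Sum.elim (fun _ => f Δ)
        (Sum.elim (fun δ₁ => Cop (link Δ δ₁)) (fun δ₁ => link Δ δ₁)) (eC Δ δ)) :
    ∀ Δ : P,
      (∑ δ : F (cyl Δ), link (cyl Δ) δ)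
          = (∑ δ : F Δ, link Δ δ) + 2 • Cop (∑ δ : F Δ, link Δ δ)
      ∧ (∑ δ : F (cone Δ), link (cone Δ) δ)
          = (∑ δ : F Δ, link Δ δ) + Cop (∑ δ : F Δ, link Δ δ) + f Δ := by
  intro Δ
  constructor
  · calc (∑ δ : F (cyl Δ), link (cyl Δ) δ)
        = ∑ δ : F Δ ⊕ F Δ ⊕ F Δ, Sum.elim (fun δ₁ => Cop (link Δ δ₁))
          (Sum.elim (fun δ₁ => Cop (link Δ δ₁)) (fun δ₁ => link Δ δ₁)) δ := by
          rw [← Equiv.sum_comp (eI Δ)]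
          exact Finset.sum_congr rfl fun δ _ => hlinkI Δ δ
    _ = _ := by
          simp [Fintype.sum_sum_type, map_sum, two_smul]
          abel
  · calc (∑ δ : F (cone Δ), link (cone Δ) δ)
        = ∑ δ : Unit ⊕ F Δ ⊕ F Δ, Sum.elim (fun _ => f Δ)
          (Sum.elim (fun δ₁ => Cop (link Δ δ₁)) (fun δ₁ => link Δ δ₁)) δ := by
          rw [← Equiv.sum_comp (eC Δ)]
          exact Finset.sum_congr rfl fun δ _ => hlinkC Δ δ
    _ = _ := by
          simp [Fintype.sum_sum_type, map_sum]
          abel
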